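/- (Theorem 2, single-node case: downweighting by fanout on the full outer join.) Let A : Finset α and B : Finset β be finite tables and J : α → β → Prop a decidable join condition; for a ∈ A let f a = |{b ∈ B : J a b}| be its fanout. Define the full outer join Ω as the finite set of pairs in Option α × Option β consisting of: all (some a, some b) with a ∈ A, b ∈ B, and J a b; all (some a, none) with a ∈ A and f a = 0; and all (none, some b) with b ∈ B such that no a ∈ A satisfies J a b. Given a decidable predicate Q on α, extend it to Ω by Q'(some a, _) = Q a and Q'(none, _) = False, and define the fanout attribute F on Ω by F(some a, _) = f a and F(none, _) = 0. Then, with the sum taken in ℝ (or ℚ), ∑ over ω ∈ Ω with Q' ω of 1 / max(F ω, 1) equals the cardinality |{a ∈ A : Q a}|; that is, the true cardinality of a query touching only table A is recovered from the full outer join by downweighting each row by the reciprocal of (the maximum of 1 and) its fanout. -/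

import Mathlib

open Finset

/-- **Theorem 2, single-node case: downweighting by fanout on the full
outer join.**  Let `f a` be the fanout of `a ∈ A` into `B`, and let `Ω` be the full
outer join of `A` and `B` (matching pairs, plus `A`-rows with no match padded with
`none`, plus `B`-rows with no match padded with `none`).  A predicate `Q` on `A` is
extended to `Ω` by failing on rows with null `A`-part, and the fanout attribute on a
row is the fanout of its `A`-part (and `0` on null `A`-part).  Then summing
`1 / max(F ω, 1)` over the rows of `Ω` satisfying the extended predicate recovers the
true cardinality `|{a ∈ A : Q a}|`. -/
theorem full_outer_join_fanout_downweighting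
    {α β : Type*} [DecidableEq α] [DecidableEq β]
    (A : Finset α) (B : Finset β)
    (J : α → β → Prop) [∀ a b, Decidable (J a b)]
    (Q : α → Prop) [DecidablePred Q]
    (f : α → ℕ) (hf : ∀ a, f a = (B.filter (fun b => J a b)).card)
    (Ω : Finset (Option α × Option β))
    (hΩ : Ω = (((A ×ˢ B).filter (fun p => J p.1 p.2)).image
                  (fun p => (some p.1, some p.2)))
            ∪ ((A.filter (fun a => f a = 0)).image (fun a => (some a, none)))
            ∪ ((B.filter (fun b => ∀ a ∈ A, ¬ J a b)).image
                  (fun b => (none, some b)))) :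
    (∑ ω ∈ Ω,
        (match ω.1 with
          | some a => if Q a then (1 : ℝ) / ((max (f a) 1 : ℕ) : ℝ) else 0
          | none => 0))
      = ((A.filter Q).card : ℝ) := by
  subst hΩ
  set g : Option α × Option β → ℝ := fun ω =>
    (match ω.1 with
      | some a => if Q a then (1 : ℝ) / ((max (f a) 1 : ℕ) : ℝ) else 0
      | none => 0) with hg
  show ∑ ω ∈ _, g ω = _
  have hdisj1 : Disjoint
      ((((A ×ˢ B).filter (fun p => J p.1 p.2)).image (fun p => (some p.1, some p.2)))
        ∪ ((A.filter (fun a => f a = 0)).image (fun a => ((some a : Option α), (none : Option β)))))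
      ((B.filter (fun b => ∀ a ∈ A, ¬ J a b)).image (fun b => ((none : Option α), some b))) := by
    simp only [disjoint_left, mem_union, mem_image, mem_filter, mem_product]
    rintro x (⟨p, _, rfl⟩ | ⟨a, _, rfl⟩) ⟨b, _, h⟩ <;> simp_all
  have hdisj2 : Disjoint
      (((A ×ˢ B).filter (fun p => J p.1 p.2)).image (fun p => ((some p.1 : Option α), (some p.2 : Option β))))
      ((A.filter (fun a => f a = 0)).image (fun a => ((some a : Option α), (none : Option β)))) := by
    simp only [disjoint_left, mem_image, mem_filter, mem_product]
    rintro x ⟨p, _, rfl⟩ ⟨a, _, h⟩; simp_all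
  rw [Finset.sum_union hdisj1, Finset.sum_union hdisj2]
  have h3 : ∑ ω ∈ (B.filter (fun b => ∀ a ∈ A, ¬ J a b)).image
      (fun b => ((none : Option α), some b)), g ω = 0 := by
    apply Finset.sum_eq_zero; intro x hx
    simp only [mem_image] at hx
    obtain ⟨b, _, rfl⟩ := hx; rfl
  rw [h3, add_zero]
  have h1 : ∑ ω ∈ ((A ×ˢ B).filter (fun p => J p.1 p.2)).image
      (fun p => ((some p.1 : Option α), (some p.2 : Option β))), g ω
      = ∑ a ∈ A, (f a : ℝ) * (if Q a then (1 : ℝ) / ((max (f a) 1 : ℕ) : ℝ) else 0) := by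
    rw [Finset.sum_image (by rintro ⟨a, b⟩ _ ⟨a', b'⟩ _ h; simpa using h)]
    rw [Finset.sum_filter, Finset.sum_product]
    refine Finset.sum_congr rfl fun a _ => ?_
    simp only [hg]
    rw [← Finset.sum_filter, Finset.sum_const, nsmul_eq_mul, ← hf a]
  have h2 : ∑ ω ∈ (A.filter (fun a => f a = 0)).image
      (fun a => ((some a : Option α), (none : Option β))), g ω
      = ∑ a ∈ A, (if f a = 0 then (if Q a then (1:ℝ) else 0) else 0) := by
    rw [Finset.sum_image (by intro a _ a' _ h; simpa using h)]
    rw [Finset.sum_filter]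
    refine Finset.sum_congr rfl fun a _ => ?_
    by_cases h0 : f a = 0 <;> simp [hg, h0]
  rw [h1, h2, ← Finset.sum_add_distrib]
  rw [Finset.card_filter, Nat.cast_sum]
  refine Finset.sum_congr rfl fun a _ => ?_
  by_cases hq : Q a
  · by_cases h0 : f a = 0
    · simp [hq, h0]
    · have : (max (f a) 1 : ℕ) = f a := Nat.max_eq_left (Nat.one_le_iff_ne_zero.mpr h0)
      rw [this]
      have : (f a : ℝ) ≠ 0 := Nat.cast_ne_zero.mpr h0
      simp [hq, h0, this]
  · simp [hq]
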